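/- Let σ be a measure on the real line with finite moments of all orders and infinite support, and let (P_n)_{n≥0} denote the orthonormal polynomials with respect to σ. Fix an integer M ≥ 0 and s ∈ ℝ, set P̂_{M+1} := P_{M+1} + s·P_M, and let λ_1 < λ_2 < … < λ_{M+1} be the zeros of P̂_{M+1} (they are real and simple). Then for every real polynomial Rp of degree at most 2M: ∫_ℝ Rp(λ) σ(dλ) = Σ_{k=1}^{M+1} Rp(λ_k) / ( Σ_{n=0}^{M} P_n(λ_k)² ). -/

import Mathlib

open MeasureTheory Filter

noncomputable section

namespace Stmt9Aux

open Polynomial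

/-- Every polynomial is integrable w.r.t. a measure with finite moments. -/
lemma integrable_eval {σ : Measure ℝ}
    (hmom : ∀ k : ℕ, Integrable (fun l : ℝ => l ^ k) σ)
    (Q : ℝ[X]) : Integrable (fun l => Q.eval l) σ := by
  have h : (fun l : ℝ => Q.eval l) =
      fun l => ∑ k ∈ Finset.range (Q.natDegree + 1), Q.coeff k * l ^ k := by
    funext l; exact eval_eq_sum_range l
  rw [h]
  exact integrable_finset_sum _ fun k _ => (hmom k).const_mul _

/-- Any polynomial of degree at most `n` is a linear combination of `P 0, …, P n`. -/
lemma rep (P : ℕ → ℝ[X]) (hPdeg : ∀ k, (P k).natDegree = k)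
    (hPlead : ∀ k, 0 < (P k).leadingCoeff) :
    ∀ n (Q : ℝ[X]), Q.natDegree ≤ n →
      ∃ c : ℕ → ℝ, Q = ∑ k ∈ Finset.range (n + 1), C (c k) * P k := by
  intro n
  induction n with
  | zero =>
    intro Q hQ
    have hP0 : P 0 = C ((P 0).coeff 0) := (P 0).eq_C_of_natDegree_le_zero (hPdeg 0).le
    have ha : (P 0).coeff 0 ≠ 0 := by
      have := hPlead 0
      rw [leadingCoeff, hPdeg 0] at this
      exact this.ne'
    refine ⟨fun _ => Q.coeff 0 / (P 0).coeff 0, ?_⟩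
    have key : C (Q.coeff 0 / (P 0).coeff 0) * P 0 = C (Q.coeff 0) := by
      rw [hP0, ← C_mul, coeff_C_zero, div_mul_cancel₀ _ ha]
    rw [Finset.sum_range_one]
    exact (Q.eq_C_of_natDegree_le_zero hQ).trans key.symm
  | succ n ih =>
    intro Q hQ
    have hlead : (P (n + 1)).coeff (n + 1) ≠ 0 := by
      have := hPlead (n + 1)
      rw [leadingCoeff, hPdeg (n + 1)] at this
      exact this.ne'
    set d : ℝ := Q.coeff (n + 1) / (P (n + 1)).coeff (n + 1) with hd
    have hQ'deg : (Q - C d * P (n + 1)).natDegree ≤ n := by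
      rw [natDegree_le_iff_coeff_eq_zero]
      intro m hm
      rcases eq_or_lt_of_le (Nat.succ_le_of_lt hm) with h | h
      · rw [coeff_sub, coeff_C_mul, ← h, hd, div_mul_cancel₀ _ hlead, sub_self]
      · rw [coeff_sub, coeff_C_mul,
          Q.coeff_eq_zero_of_natDegree_lt (lt_of_le_of_lt hQ h),
          (P (n + 1)).coeff_eq_zero_of_natDegree_lt (by rw [hPdeg]; exact h),
          mul_zero, sub_self]
    obtain ⟨c, hc⟩ := ih (Q - C d * P (n + 1)) hQ'deg
    refine ⟨fun k => if k = n + 1 then d else c k, ?_⟩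
    show Q = ∑ k ∈ Finset.range (n + 1 + 1), C (if k = n + 1 then d else c k) * P k
    have hsame : ∑ k ∈ Finset.range (n + 1), C (if k = n + 1 then d else c k) * P k
        = ∑ k ∈ Finset.range (n + 1), C (c k) * P k := by
      refine Finset.sum_congr rfl fun k hk => ?_
      have := Finset.mem_range.mp hk
      rw [if_neg (by omega)]
    rw [Finset.sum_range_succ, if_pos rfl, hsame, ← hc]
    ring

/-- Integral of a linear combination of the `P k` against `P m`. -/
lemma key_int {σ : Measure ℝ}
    (hmom : ∀ k : ℕ, Integrable (fun l : ℝ => l ^ k) σ)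
    (P : ℕ → ℝ[X])
    (hPorth : ∀ k m, (∫ l, (P k).eval l * (P m).eval l ∂σ) = if k = m then 1 else 0)
    (c : ℕ → ℝ) (n m : ℕ) :
    (∫ l, (∑ k ∈ Finset.range n, C (c k) * P k).eval l * (P m).eval l ∂σ)
      = if m ∈ Finset.range n then c m else 0 := by
  have h : (fun l => (∑ k ∈ Finset.range n, C (c k) * P k).eval l * (P m).eval l)
      = fun l => ∑ k ∈ Finset.range n, c k * ((P k).eval l * (P m).eval l) := by
    funext l
    rw [eval_finset_sum, Finset.sum_mul]
    refine Finset.sum_congr rfl fun k _ => ?_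
    simp [mul_assoc]
  rw [h, integral_finset_sum]
  · have : ∀ k ∈ Finset.range n,
        (∫ l, c k * ((P k).eval l * (P m).eval l) ∂σ) = c k * if k = m then 1 else 0 := by
      intro k _
      rw [integral_const_mul, hPorth]
    rw [Finset.sum_congr rfl this]
    simp [Finset.sum_ite_eq', eq_comm]
  · intro k _
    have : (fun l => c k * ((P k).eval l * (P m).eval l))
        = fun l => (C (c k) * (P k * P m)).eval l := by
      funext l; simp [mul_assoc]
    rw [this]
    exact integrable_eval hmom _

/-- Orthogonality of `P n` to lower-degree polynomials. -/
lemma orth {σ : Measure ℝ}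
    (hmom : ∀ k : ℕ, Integrable (fun l : ℝ => l ^ k) σ)
    (P : ℕ → ℝ[X]) (hPdeg : ∀ k, (P k).natDegree = k)
    (hPlead : ∀ k, 0 < (P k).leadingCoeff)
    (hPorth : ∀ k m, (∫ l, (P k).eval l * (P m).eval l ∂σ) = if k = m then 1 else 0)
    {n : ℕ} {Q : ℝ[X]} (hQ : Q.natDegree < n) :
    (∫ l, Q.eval l * (P n).eval l ∂σ) = 0 := by
  obtain ⟨m, rfl⟩ : ∃ m, n = m + 1 := ⟨n - 1, by omega⟩
  obtain ⟨c, hc⟩ := rep P hPdeg hPlead m Q (by omega)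
  rw [hc, key_int hmom P hPorth, if_neg (by simp)]

lemma main (σ : Measure ℝ)
    (hmom : ∀ k : ℕ, Integrable (fun l : ℝ => l ^ k) σ)
    (P : ℕ → Polynomial ℝ) (hPdeg : ∀ k, (P k).natDegree = k)
    (hPlead : ∀ k, 0 < (P k).leadingCoeff)
    (hPorth : ∀ k m, (∫ l, (P k).eval l * (P m).eval l ∂σ) = if k = m then 1 else 0)
    (M : ℕ) (s : ℝ) (lam : Fin (M + 1) → ℝ) (hlam : StrictMono lam)
    (hroots : ∀ j, (P (M + 1) + Polynomial.C s * P M).eval (lam j) = 0)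
    (Rp : Polynomial ℝ) (hRp : Rp.natDegree ≤ 2 * M) :
    ∫ l, Rp.eval l ∂σ =
      ∑ j, Rp.eval (lam j) / ∑ k ∈ Finset.range (M + 1), (P k).eval (lam j) ^ 2 := by
  classical
  set Phat : ℝ[X] := P (M + 1) + C s * P M with hPhat
  have hPhatdeg : Phat.natDegree = M + 1 := by
    rw [hPhat, natDegree_add_eq_left_of_natDegree_lt, hPdeg]
    calc (C s * P M).natDegree ≤ (P M).natDegree := natDegree_C_mul_le s (P M)
      _ < (P (M + 1)).natDegree := by rw [hPdeg, hPdeg]; omega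
  have hPhatne : Phat ≠ 0 := fun h => by simp [h] at hPhatdeg
  set mm : ℝ[X] := Phat * C (Phat.leadingCoeff)⁻¹ with hmm
  have hmono : mm.Monic := monic_mul_leadingCoeff_inv hPhatne
  have hmmdeg : mm.natDegree = M + 1 := by
    rw [hmm, natDegree_mul_leadingCoeff_inv _ hPhatne, hPhatdeg]
  have hmmroot : ∀ j, mm.eval (lam j) = 0 := by
    intro j
    rw [hmm, eval_mul]
    rw [hPhat] at *
    rw [hroots j, zero_mul]
  have hinj : Set.InjOn lam ↑(Finset.univ : Finset (Fin (M + 1))) :=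
    fun a _ b _ h => hlam.injective h
  have hcard : (Finset.univ : Finset (Fin (M + 1))).card = M + 1 := by simp
  set L : Fin (M + 1) → ℝ[X] := fun j => Lagrange.basis Finset.univ lam j with hLdef
  set w : Fin (M + 1) → ℝ := fun j => ∫ l, (L j).eval l ∂σ with hw
  have helper : ∀ g : Fin (M + 1) → ℝ,
      (∫ l, (∑ j, C (g j) * L j).eval l ∂σ) = ∑ j, w j * g j := by
    intro g
    have h : (fun l => (∑ j, C (g j) * L j).eval l)
        = fun l => ∑ j, g j * (L j).eval l := by
      funext l
      rw [eval_finset_sum]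
      exact Finset.sum_congr rfl fun j _ => by simp
    rw [h, integral_finset_sum]
    · refine Finset.sum_congr rfl fun j _ => ?_
      rw [integral_const_mul, hw, mul_comm]
    · intro j _
      have h2 : (fun l => g j * (L j).eval l) = fun l => (C (g j) * L j).eval l := by
        funext l; simp
      rw [h2]; exact integrable_eval hmom _
  have quadW : ∀ Q : ℝ[X], Q.natDegree ≤ 2 * M →
      (∫ l, Q.eval l ∂σ) = ∑ j, w j * Q.eval (lam j) := by
    intro Q hQ
    set r := Q %ₘ mm with hr
    set q := Q /ₘ mm with hq
    have hQeq : r + mm * q = Q := modByMonic_add_div Q mm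
    have hrdeg : r.natDegree ≤ M := by
      by_cases h0 : r = 0
      · simp [h0]
      · have hlt := degree_modByMonic_lt Q hmono
        rw [← hr, degree_eq_natDegree hmono.ne_zero, hmmdeg] at hlt
        have := (natDegree_lt_iff_degree_lt h0).mpr hlt
        omega
    have hint_mq : (∫ l, (mm * q).eval l ∂σ) = 0 := by
      by_cases hq0 : q = 0
      · simp [hq0]
      · have hqdeg : q.natDegree < M := by
          have h1 : (mm * q).natDegree = M + 1 + q.natDegree := by
            rw [natDegree_mul hmono.ne_zero hq0, hmmdeg]
          have h2 : Q.natDegree = (mm * q).natDegree := by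
            conv_lhs => rw [← hQeq]
            exact natDegree_add_eq_right_of_natDegree_lt (by omega)
          omega
        have hexpand : (fun l => (mm * q).eval l)
            = fun l => Phat.leadingCoeff⁻¹ * (q.eval l * (P (M + 1)).eval l)
                + Phat.leadingCoeff⁻¹ * s * (q.eval l * (P M).eval l) := by
          funext l
          rw [hmm, hPhat]
          simp only [eval_mul, eval_add, eval_C]
          ring
        have hi1 : Integrable
            (fun l => Phat.leadingCoeff⁻¹ * (q.eval l * (P (M + 1)).eval l)) σ := by
          have h3 : (fun l => Phat.leadingCoeff⁻¹ * (q.eval l * (P (M + 1)).eval l))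
              = fun l => (C Phat.leadingCoeff⁻¹ * (q * P (M + 1))).eval l := by
            funext l; simp
          rw [h3]; exact integrable_eval hmom _
        have hi2 : Integrable
            (fun l => Phat.leadingCoeff⁻¹ * s * (q.eval l * (P M).eval l)) σ := by
          have h3 : (fun l => Phat.leadingCoeff⁻¹ * s * (q.eval l * (P M).eval l))
              = fun l => (C (Phat.leadingCoeff⁻¹ * s) * (q * P M)).eval l := by
            funext l; simp
          rw [h3]; exact integrable_eval hmom _
        rw [hexpand, integral_add hi1 hi2, integral_const_mul, integral_const_mul,
          orth hmom P hPdeg hPlead hPorth (show q.natDegree < M + 1 by omega),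
          orth hmom P hPdeg hPlead hPorth hqdeg]
        ring
    have hrQ : ∀ j, r.eval (lam j) = Q.eval (lam j) := by
      intro j
      conv_rhs => rw [← hQeq]
      rw [eval_add, eval_mul, hmmroot j, zero_mul, add_zero]
    have hrinterp : r = ∑ j, C (Q.eval (lam j)) * L j := by
      have hdlt : r.degree < ((Finset.univ : Finset (Fin (M + 1))).card : WithBot ℕ) := by
        rw [hcard]
        calc r.degree ≤ (r.natDegree : WithBot ℕ) := degree_le_natDegree
          _ ≤ (M : WithBot ℕ) := by exact_mod_cast hrdeg
          _ < ((M + 1 : ℕ) : WithBot ℕ) := by exact_mod_cast Nat.lt_succ_self M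
      calc r = Lagrange.interpolate Finset.univ lam (fun i => r.eval (lam i)) :=
            Lagrange.eq_interpolate hinj hdlt
        _ = ∑ j, C (r.eval (lam j)) * L j := by rw [Lagrange.interpolate_apply]
        _ = ∑ j, C (Q.eval (lam j)) * L j := by
            exact Finset.sum_congr rfl fun j _ => by rw [hrQ j]
    have heval : (fun l => Q.eval l) = fun l => r.eval l + (mm * q).eval l := by
      funext l
      rw [← eval_add, hQeq]
    rw [heval, integral_add (integrable_eval hmom _) (integrable_eval hmom _), hint_mq,
      add_zero, hrinterp]
    exact helper _
  have hwj : ∀ j, w j = 1 / ∑ k ∈ Finset.range (M + 1), (P k).eval (lam j) ^ 2 := by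
    intro j
    set K : ℝ := ∑ k ∈ Finset.range (M + 1), (P k).eval (lam j) ^ 2 with hK
    have hLdeg : (L j).natDegree = M := by
      have := Lagrange.natDegree_basis hinj (Finset.mem_univ j)
      rw [hcard] at this
      simpa using this
    obtain ⟨a, ha⟩ := rep P hPdeg hPlead M (L j) hLdeg.le
    have hL1 : (L j).eval (lam j) = 1 := Lagrange.eval_basis_self hinj (Finset.mem_univ j)
    set Kp : ℝ[X] := ∑ k ∈ Finset.range (M + 1), C ((P k).eval (lam j)) * P k with hKp
    have hKpdeg : Kp.natDegree ≤ M := by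
      apply natDegree_sum_le_of_forall_le
      intro k hk
      refine le_trans (natDegree_C_mul_le _ _) ?_
      rw [hPdeg]
      exact Nat.lt_succ_iff.mp (Finset.mem_range.mp hk)
    have hGdeg : (Kp * L j).natDegree ≤ 2 * M := by
      refine le_trans natDegree_mul_le ?_
      rw [hLdeg]
      omega
    have hGeval : ∀ i, (Kp * L j).eval (lam i) = if i = j then K else 0 := by
      intro i
      by_cases hij : i = j
      · subst hij
        rw [if_pos rfl, eval_mul, hL1, mul_one, hKp, eval_finset_sum, hK]
        refine Finset.sum_congr rfl fun k _ => ?_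
        simp [sq]
      · rw [if_neg hij, eval_mul, hLdef]
        rw [Lagrange.eval_basis_of_ne (fun h => hij (h.symm)) (Finset.mem_univ i), mul_zero]
    have h1 : (∫ l, (Kp * L j).eval l ∂σ) = w j * K := by
      rw [quadW _ hGdeg]
      calc ∑ i, w i * (Kp * L j).eval (lam i)
          = ∑ i, if i = j then w i * K else 0 := by
            refine Finset.sum_congr rfl fun i _ => ?_
            rw [hGeval i]
            split_ifs <;> ring
        _ = w j * K := by simp
    have h2 : (∫ l, (Kp * L j).eval l ∂σ) = 1 := by
      have hexp : (fun l => (Kp * L j).eval l)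
          = fun l => ∑ k ∈ Finset.range (M + 1),
              (P k).eval (lam j) * ((L j).eval l * (P k).eval l) := by
        funext l
        rw [eval_mul, hKp, eval_finset_sum, Finset.sum_mul]
        refine Finset.sum_congr rfl fun k _ => ?_
        simp only [eval_mul, eval_C]
        ring
      rw [hexp, integral_finset_sum]
      · have hterm : ∀ k ∈ Finset.range (M + 1),
            (∫ l, (P k).eval (lam j) * ((L j).eval l * (P k).eval l) ∂σ)
              = (P k).eval (lam j) * a k := by
          intro k hk
          rw [integral_const_mul, ha, key_int hmom P hPorth, if_pos hk]
        rw [Finset.sum_congr rfl hterm]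
        have hsum : ∑ k ∈ Finset.range (M + 1), (P k).eval (lam j) * a k
            = (L j).eval (lam j) := by
          conv_rhs => rw [ha]
          rw [eval_finset_sum]
          refine Finset.sum_congr rfl fun k _ => ?_
          simp only [eval_mul, eval_C]
          ring
        rw [hsum, hL1]
      · intro k _
        have h3 : (fun l => (P k).eval (lam j) * ((L j).eval l * (P k).eval l))
            = fun l => (C ((P k).eval (lam j)) * (L j * P k)).eval l := by
          funext l; simp [mul_assoc]
        rw [h3]; exact integrable_eval hmom _
    have hKpos : 0 < K := by
      rw [hK]
      refine Finset.sum_pos' (fun k _ => sq_nonneg _) ⟨0, Finset.mem_range.mpr (by omega), ?_⟩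
      have hc0 : (P 0).coeff 0 ≠ 0 := by
        have := hPlead 0
        rw [leadingCoeff, hPdeg 0] at this
        exact this.ne'
      have hP0 : (P 0).eval (lam j) ≠ 0 := by
        rw [(P 0).eq_C_of_natDegree_le_zero (hPdeg 0).le]
        simpa using hc0
      positivity
    rw [eq_div_iff hKpos.ne']
    exact h1.symm.trans h2
  rw [quadW Rp hRp]
  refine Finset.sum_congr rfl fun j _ => ?_
  rw [hwj j]
  ring

end Stmt9Aux

/-- Lemma A.1 -/
theorem stmt9 (σ : Measure ℝ)
    (hmom : ∀ k : ℕ, Integrable (fun l : ℝ => l ^ k) σ)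
    (hsupp : {x : ℝ | ∀ U ∈ nhds x, σ U ≠ 0}.Infinite)
    (P : ℕ → Polynomial ℝ) (hPdeg : ∀ k, (P k).natDegree = k)
    (hPlead : ∀ k, 0 < (P k).leadingCoeff)
    (hPorth : ∀ k m, (∫ l, (P k).eval l * (P m).eval l ∂σ) = if k = m then 1 else 0)
    (M : ℕ) (s : ℝ) (lam : Fin (M + 1) → ℝ) (hlam : StrictMono lam)
    (hroots : ∀ j, (P (M + 1) + Polynomial.C s * P M).eval (lam j) = 0)
    (Rp : Polynomial ℝ) (hRp : Rp.natDegree ≤ 2 * M) :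
    ∫ l, Rp.eval l ∂σ =
      ∑ j, Rp.eval (lam j) / ∑ k ∈ Finset.range (M + 1), (P k).eval (lam j) ^ 2 :=
  Stmt9Aux.main σ hmom P hPdeg hPlead hPorth M s lam hlam hroots Rp hRp

end
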